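/- Let W ∈ ℝ^{n×n} be symmetric with nonnegative entries, and suppose the graph on nodes {1,…,n} with an edge between distinct i and j whenever W_{ij} > 0 is connected (for every pair of distinct nodes i, j there exist indices i = p_0, p_1, …, p_m = j with W_{p_t p_{t+1}} > 0 for all t). Let ℒ = D − W + Diag(W_{11},…,W_{nn}) be the generalized graph Laplacian, where D_{ii} = Σ_j W_{ij}. Let h ∈ {0,1}ⁿ be a binary vector with at least one entry equal to 1, and let μ > 0. Then the matrix B = Diag(h) + μℒ is positive definite. -/

import Mathlib

open Matrix

/-- the paper's Lemma 1: for a connected positive graph (possibly with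
self-loops) with generalized Laplacian ℒ, a binary vector h with at least one 1, and μ > 0,
the coefficient matrix B = Diag(h) + μℒ is positive definite. -/
theorem stmt6 {n : ℕ} (W : Matrix (Fin n) (Fin n) ℝ)
    (hsym : W.IsSymm) (hnn : ∀ i j, 0 ≤ W i j)
    (hconn : ∀ i j : Fin n, i ≠ j → ∃ (m : ℕ) (p : Fin (m + 1) → Fin n),
      p 0 = i ∧ p (Fin.last m) = j ∧ ∀ t : Fin m, 0 < W (p t.castSucc) (p t.succ))
    (h : Fin n → ℝ) (hbin : ∀ i, h i = 0 ∨ h i = 1) (hone : ∃ i, h i = 1)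
    (μ : ℝ) (hμ : 0 < μ) :
    (Matrix.diagonal h
      + μ • (Matrix.diagonal (fun i => ∑ j, W i j) - W
              + Matrix.diagonal (fun i => W i i))).PosDef := by
  have hswap : ∀ i j, W j i = W i j := fun i j => by
    have := congrFun (congrFun hsym i) j; simpa [Matrix.transpose_apply] using this
  have quad : ∀ x : Fin n → ℝ,
      x ⬝ᵥ ((Matrix.diagonal h
        + μ • (Matrix.diagonal (fun i => ∑ j, W i j) - W
                + Matrix.diagonal (fun i => W i i))) *ᵥ x)
      = (∑ i, h i * x i ^ 2)
        + μ * ((∑ i, ∑ j, W i j * (x i - x j)^2 / 2) + ∑ i, W i i * x i ^ 2) := by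
    intro x
    have key : (∑ i, ∑ j, W i j * (x i - x j)^2 / 2)
        = (∑ i, (∑ j, W i j) * x i ^ 2) - ∑ i, ∑ j, x i * (W i j * x j) := by
      have e1 : ∀ i j : Fin n, W i j * (x i - x j)^2 / 2
          = W i j * x i ^2 / 2 + W i j * x j ^2 / 2 - x i * (W i j * x j) := by
        intro i j; ring
      simp only [e1, Finset.sum_sub_distrib, Finset.sum_add_distrib]
      have e2 : (∑ i, ∑ j, W i j * x j ^ 2 / 2) = ∑ i, ∑ j, W i j * x i ^ 2 / 2 := by
        rw [Finset.sum_comm]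
        exact Finset.sum_congr rfl fun i _ => Finset.sum_congr rfl fun j _ => by rw [hswap]
      rw [e2, ← Finset.sum_add_distrib]
      congr 1
      refine Finset.sum_congr rfl fun i _ => ?_
      rw [← Finset.sum_add_distrib, Finset.sum_mul]
      exact Finset.sum_congr rfl fun j _ => by ring
    rw [key]
    have dd : ∀ v : Fin n → ℝ, x ⬝ᵥ (Matrix.diagonal v *ᵥ x) = ∑ i, v i * x i ^ 2 := by
      intro v
      simp only [dotProduct, Matrix.mulVec_diagonal]
      exact Finset.sum_congr rfl fun i _ => by ring
    have dw : x ⬝ᵥ (W *ᵥ x) = ∑ i, ∑ j, x i * (W i j * x j) := by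
      simp [dotProduct, Matrix.mulVec, Finset.mul_sum]
    rw [Matrix.add_mulVec, dotProduct_add, Matrix.smul_mulVec, dotProduct_smul,
      Matrix.add_mulVec, Matrix.sub_mulVec, dotProduct_add, dotProduct_sub, dd, dd, dd, dw]
    simp only [smul_eq_mul]
  rw [Matrix.posDef_iff_dotProduct_mulVec]
  constructor
  · rw [Matrix.IsHermitian, Matrix.conjTranspose_eq_transpose_of_trivial,
      Matrix.transpose_add, Matrix.transpose_smul, Matrix.transpose_add,
      Matrix.transpose_sub, Matrix.diagonal_transpose, Matrix.diagonal_transpose,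
      Matrix.diagonal_transpose, hsym.eq]
  · intro x hx
    rw [star_trivial, quad]
    -- nonnegativity of summands
    have hS1 : 0 ≤ ∑ i, h i * x i ^ 2 := Finset.sum_nonneg fun i _ => by
      rcases hbin i with h0 | h1
      · simp [h0]
      · rw [h1]; positivity
    have hS2 : 0 ≤ ∑ i, ∑ j, W i j * (x i - x j)^2 / 2 :=
      Finset.sum_nonneg fun i _ => Finset.sum_nonneg fun j _ => by
        have := hnn i j; positivity
    have hS3 : 0 ≤ ∑ i, W i i * x i ^ 2 := Finset.sum_nonneg fun i _ => by
      have := hnn i i; positivity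
    by_contra hle
    push_neg at hle
    have htot : (∑ i, h i * x i ^ 2)
        + μ * ((∑ i, ∑ j, W i j * (x i - x j)^2 / 2) + ∑ i, W i i * x i ^ 2) = 0 := by
      have : 0 ≤ (∑ i, h i * x i ^ 2)
          + μ * ((∑ i, ∑ j, W i j * (x i - x j)^2 / 2) + ∑ i, W i i * x i ^ 2) := by
        have := mul_nonneg hμ.le (add_nonneg hS2 hS3); linarith
      linarith
    have hS1z : (∑ i, h i * x i ^ 2) = 0 := by nlinarith
    have hS2z : (∑ i, ∑ j, W i j * (x i - x j)^2 / 2) = 0 := by nlinarith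
    -- each term of S1 is zero
    have hS1t : ∀ i, h i * x i ^ 2 = 0 := by
      intro i
      have := (Finset.sum_eq_zero_iff_of_nonneg (fun i _ => by
        rcases hbin i with h0 | h1
        · simp [h0]
        · rw [h1]; positivity)).mp hS1z
      exact this i (Finset.mem_univ i)
    -- edges force equality
    have hedge : ∀ i j, 0 < W i j → x i = x j := by
      intro i j hWij
      have hinner := (Finset.sum_eq_zero_iff_of_nonneg (fun i _ =>
        Finset.sum_nonneg fun j _ => by have := hnn i j; positivity)).mp hS2z i
        (Finset.mem_univ i)
      have hterm := (Finset.sum_eq_zero_iff_of_nonneg (fun j _ => by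
        have := hnn i j; positivity)).mp hinner j (Finset.mem_univ j)
      have : (x i - x j)^2 = 0 := by
        rcases mul_eq_zero.mp (by linarith [hterm] : W i j * (x i - x j)^2 = 0) with hc | hc
        · exact absurd hc (ne_of_gt hWij)
        · exact hc
      have := pow_eq_zero_iff (n := 2) (by norm_num) |>.mp this
      linarith
    obtain ⟨i0, hi0⟩ := hone
    have hxi0 : x i0 = 0 := by
      have := hS1t i0
      rw [hi0, one_mul] at this
      exact pow_eq_zero_iff (n := 2) (by norm_num) |>.mp this
    -- every coordinate is zero
    apply hx
    funext k
    by_cases hk : k = i0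
    · rw [hk]; exact hxi0
    · obtain ⟨m, p, hp0, hpl, hpe⟩ := hconn i0 k (Ne.symm hk)
      have hall : ∀ t : Fin (m + 1), x (p t) = 0 := by
        intro t
        induction t using Fin.induction with
        | zero => rw [hp0]; exact hxi0
        | succ t ih =>
          rw [← hedge _ _ (hpe t)]
          exact ih
      have := hall (Fin.last m)
      rw [hpl] at this
      exact this
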